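/- With notation as above, for π ∈ S^{(ε)}_{2l} define π̃ ∈ S_l by π²(p_k) = p_{π̃(k)}. Then the number of cycles of π equals the number of cycles of π̃, and hence |π| = |π̃| + l. -/

import Mathlib

/-- The minimal number of transpositions needed to write `π` as a product of transpositions. -/
noncomputable def transLength {N : ℕ} (π : Equiv.Perm (Fin N)) : ℕ :=
  sInf {k | ∃ l : List (Equiv.Perm (Fin N)),
    (∀ τ ∈ l, τ.IsSwap) ∧ l.prod = π ∧ l.length = k}

/-- The number of cycles of `π`, counting fixed points as cycles. -/
def numCycles {N : ℕ} (π : Equiv.Perm (Fin N)) : ℕ :=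
  π.cycleType.card + (Finset.univ.filter fun x => π x = x).card

namespace PfAux
open Equiv Equiv.Perm
variable {N : ℕ}


def sc (σ : Equiv.Perm (Fin N)) : Setoid (Fin N) :=
  ⟨σ.SameCycle, ⟨fun _ => Equiv.Perm.SameCycle.refl σ _,
    Equiv.Perm.SameCycle.symm, Equiv.Perm.SameCycle.trans⟩⟩

noncomputable def nc (σ : Equiv.Perm (Fin N)) : ℕ := Nat.card (Quotient (sc σ))

lemma sameCycle_iff_nat {σ : Equiv.Perm (Fin N)} {x y : Fin N} :
    σ.SameCycle x y ↔ ∃ n : ℕ, (σ ^ n) x = y := by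
  constructor
  · intro h
    obtain ⟨i, _, hi⟩ := h.exists_pow_eq'
    exact ⟨i, hi⟩
  · rintro ⟨n, rfl⟩
    exact ⟨(n : ℤ), by rw [zpow_natCast]⟩

lemma fixed_pow {σ : Equiv.Perm (Fin N)} {x : Fin N} (hx : σ x = x) :
    ∀ n : ℕ, (σ ^ n) x = x := by
  intro n
  induction n with
  | zero => simp
  | succ n ih => simp [pow_succ', Equiv.Perm.mul_apply, ih, hx]

lemma fixed_eq {σ : Equiv.Perm (Fin N)} {x y : Fin N} (hx : σ x = x)
    (h : σ.SameCycle x y) : y = x := by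
  obtain ⟨n, rfl⟩ := sameCycle_iff_nat.mp h
  exact fixed_pow hx n

lemma lemW {σ : Equiv.Perm (Fin N)} {a b : Fin N} {x : Fin N} (n : ℕ)
    (h : (σ ^ n) x = a ∨ (σ ^ n) x = b) :
    (Equiv.swap a b * σ).SameCycle x a ∨ (Equiv.swap a b * σ).SameCycle x b := by
  induction n generalizing x with
  | zero =>
    simp only [pow_zero, Equiv.Perm.one_apply] at h
    rcases h with rfl | rfl
    · exact Or.inl (Equiv.Perm.SameCycle.refl _ _)
    · exact Or.inr (Equiv.Perm.SameCycle.refl _ _)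
  | succ n ih =>
    rw [pow_succ, Equiv.Perm.mul_apply] at h
    by_cases ha : σ x = a
    · refine Or.inr ⟨1, ?_⟩
      simp [Equiv.Perm.mul_apply, ha]
    · by_cases hb : σ x = b
      · refine Or.inl ⟨1, ?_⟩
        simp [Equiv.Perm.mul_apply, hb]
      · have hstep : (Equiv.swap a b * σ).SameCycle x (σ x) :=
          ⟨1, by simp [Equiv.Perm.mul_apply, Equiv.swap_apply_of_ne_of_ne ha hb]⟩
        exact (ih h).imp hstep.trans hstep.trans

lemma lemU {σ : Equiv.Perm (Fin N)} {a b x : Fin N}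
    (h : ∀ n : ℕ, (σ ^ n) x ≠ a ∧ (σ ^ n) x ≠ b) :
    ∀ n : ℕ, ((Equiv.swap a b * σ) ^ n) x = (σ ^ n) x := by
  intro n
  induction n with
  | zero => rfl
  | succ n ih =>
    calc ((Equiv.swap a b * σ) ^ (n+1)) x
        = (Equiv.swap a b * σ) (((Equiv.swap a b * σ) ^ n) x) := by
          rw [pow_succ', Equiv.Perm.mul_apply]
      _ = Equiv.swap a b (σ ((σ ^ n) x)) := by rw [ih, Equiv.Perm.mul_apply]
      _ = Equiv.swap a b ((σ ^ (n+1)) x) := by rw [pow_succ', Equiv.Perm.mul_apply]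
      _ = (σ ^ (n+1)) x := Equiv.swap_apply_of_ne_of_ne (h (n+1)).1 (h (n+1)).2

lemma transfer {σ : Equiv.Perm (Fin N)} {a b x y : Fin N}
    (ha : ¬ σ.SameCycle x a) (hb : ¬ σ.SameCycle x b)
    (h : σ.SameCycle x y) : (Equiv.swap a b * σ).SameCycle x y := by
  obtain ⟨n, rfl⟩ := sameCycle_iff_nat.mp h
  have hav : ∀ m : ℕ, (σ ^ m) x ≠ a ∧ (σ ^ m) x ≠ b := fun m =>
    ⟨fun hm => ha (sameCycle_iff_nat.mpr ⟨m, hm⟩),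
     fun hm => hb (sameCycle_iff_nat.mpr ⟨m, hm⟩)⟩
  exact sameCycle_iff_nat.mpr ⟨n, lemU hav n⟩

lemma lemW' {σ : Equiv.Perm (Fin N)} {a b x : Fin N}
    (h : σ.SameCycle x a ∨ σ.SameCycle x b) :
    (Equiv.swap a b * σ).SameCycle x a ∨ (Equiv.swap a b * σ).SameCycle x b := by
  rcases h with h | h <;> obtain ⟨n, hn⟩ := sameCycle_iff_nat.mp h
  · exact lemW n (Or.inl hn)
  · exact lemW n (Or.inr hn)



lemma nc_swap_mul_le (σ : Equiv.Perm (Fin N)) (a b : Fin N) :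
    nc (Equiv.swap a b * σ) ≤ nc σ + 1 := by
  classical
  set σ' := Equiv.swap a b * σ with hσ'
  set g : Fin N → Quotient (sc σ') := fun z =>
    if σ.SameCycle z a then Quotient.mk (sc σ') a
    else if σ.SameCycle z b then Quotient.mk (sc σ') b
    else Quotient.mk (sc σ') z with hg
  have hwd : ∀ z w : Fin N, σ.SameCycle z w → g z = g w := by
    intro z w hzw
    by_cases hza : σ.SameCycle z a
    · have hwa : σ.SameCycle w a := hzw.symm.trans hza
      simp [hg, hza, hwa]
    · have hwa : ¬ σ.SameCycle w a := fun h => hza (hzw.trans h)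
      by_cases hzb : σ.SameCycle z b
      · have hwb : σ.SameCycle w b := hzw.symm.trans hzb
        simp [hg, hza, hwa, hzb, hwb]
      · have hwb : ¬ σ.SameCycle w b := fun h => hzb (hzw.trans h)
        simp only [hg, if_neg hza, if_neg hwa, if_neg hzb, if_neg hwb]
        exact Quotient.sound (transfer hza hzb hzw)
  set G : Quotient (sc σ) ⊕ Unit → Quotient (sc σ') :=
    Sum.elim (Quotient.lift g hwd) (fun _ => Quotient.mk (sc σ') b) with hG
  have hsurj : Function.Surjective G := by
    intro q
    obtain ⟨z, rfl⟩ := q.exists_rep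
    by_cases h1 : σ'.SameCycle z a
    · refine ⟨Sum.inl (Quotient.mk (sc σ) a), ?_⟩
      have : g a = Quotient.mk (sc σ') a := by
        simp [hg, Equiv.Perm.SameCycle.refl]
      exact this.trans (Quotient.sound (s := sc σ') h1.symm)
    · by_cases h2 : σ'.SameCycle z b
      · exact ⟨Sum.inr (), Quotient.sound h2.symm⟩
      · refine ⟨Sum.inl (Quotient.mk (sc σ) z), ?_⟩
        have hna : ¬ σ.SameCycle z a := by
          intro h
          rcases lemW' (b := b) (Or.inl h) with h' | h'
          · exact h1 h'
          · exact h2 h'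
        have hnb : ¬ σ.SameCycle z b := by
          intro h
          rcases lemW' (a := a) (Or.inr h) with h' | h'
          · exact h1 h'
          · exact h2 h'
        simp [hG, hg, hna, hnb]
  have := Nat.card_le_card_of_surjective G hsurj
  simpa [nc, Nat.card_sum] using this

lemma nc_add_one_le (σ : Equiv.Perm (Fin N)) {x : Fin N} (hx : σ x ≠ x) :
    nc σ + 1 ≤ nc (Equiv.swap x (σ x) * σ) := by
  classical
  set σ' := Equiv.swap x (σ x) * σ with hσ'
  have hback : Equiv.swap x (σ x) * σ' = σ := swap_mul_self_mul _ _ _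
  have hfix : σ' x = x := by
    simp [hσ', Equiv.Perm.mul_apply]
  have hW : ∀ z : Fin N, σ'.SameCycle z x ∨ σ'.SameCycle z (σ x) → σ.SameCycle z x := by
    intro z h
    have h2 := lemW' (a := x) (b := σ x) (σ := σ') h
    rw [hback] at h2
    rcases h2 with h2 | h2
    · exact h2
    · exact h2.trans ⟨-1, by simp⟩
  set g : Fin N → Quotient (sc σ') := fun z =>
    if σ.SameCycle z x then Quotient.mk (sc σ') (σ x) else Quotient.mk (sc σ') z with hg
  have hwd : ∀ z w : Fin N, σ.SameCycle z w → g z = g w := by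
    intro z w hzw
    by_cases hzx : σ.SameCycle z x
    · have hwx : σ.SameCycle w x := hzw.symm.trans hzx
      simp [hg, hzx, hwx]
    · have hwx : ¬ σ.SameCycle w x := fun h => hzx (hzw.trans h)
      simp only [hg, if_neg hzx, if_neg hwx]
      have hzb : ¬ σ.SameCycle z (σ x) := fun h => hzx (h.trans ⟨-1, by simp⟩)
      exact Quotient.sound (transfer hzx hzb hzw)
  set H : Quotient (sc σ) ⊕ Unit → Quotient (sc σ') :=
    Sum.elim (Quotient.lift g hwd) (fun _ => Quotient.mk (sc σ') x) with hH
  have hfixc : ∀ z : Fin N, σ'.SameCycle x z → z = x := fun z h => fixed_eq hfix h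
  have hne : ¬ σ'.SameCycle x (σ x) := fun h => hx (hfixc _ h)
  have hinj : Function.Injective H := by
    rintro (q | u) (q' | u') h
    · obtain ⟨z, rfl⟩ := q.exists_rep
      obtain ⟨w, rfl⟩ := q'.exists_rep
      simp only [hH, Sum.elim_inl, Quotient.lift_mk] at h
      by_cases hzx : σ.SameCycle z x <;> by_cases hwx : σ.SameCycle w x
      · exact congrArg Sum.inl (Quotient.sound (hzx.trans hwx.symm))
      · exfalso
        change g z = g w at h
        rw [hg] at h
        simp only [if_pos hzx, if_neg hwx] at h
        exact hwx (hW w (Or.inr (Quotient.exact h).symm))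
      · exfalso
        change g z = g w at h
        rw [hg] at h
        simp only [if_neg hzx, if_pos hwx] at h
        exact hzx (hW z (Or.inr (Quotient.exact h)))
      · refine congrArg Sum.inl (Quotient.sound ?_)
        change g z = g w at h
        rw [hg] at h
        simp only [if_neg hzx, if_neg hwx] at h
        have hzw' : σ'.SameCycle z w := Quotient.exact h
        have hza' : ¬ σ'.SameCycle z x := fun h' => hzx (hW z (Or.inl h'))
        have hzb' : ¬ σ'.SameCycle z (σ x) := fun h' => hzx (hW z (Or.inr h'))
        have := transfer hza' hzb' hzw'
        rwa [hback] at this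
    · exfalso
      obtain ⟨z, rfl⟩ := q.exists_rep
      simp only [hH, Sum.elim_inl, Sum.elim_inr, Quotient.lift_mk] at h
      change g z = Quotient.mk (sc σ') x at h
      rw [hg] at h
      beta_reduce at h
      by_cases hzx : σ.SameCycle z x
      · rw [if_pos hzx] at h
        exact hne (Quotient.exact h).symm
      · rw [if_neg hzx] at h
        have : z = x := hfixc z (Quotient.exact h).symm
        exact hzx (this ▸ Equiv.Perm.SameCycle.refl σ x)
    · exfalso
      obtain ⟨z, rfl⟩ := q'.exists_rep
      simp only [hH, Sum.elim_inl, Sum.elim_inr, Quotient.lift_mk] at h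
      change Quotient.mk (sc σ') x = g z at h
      rw [hg] at h
      beta_reduce at h
      by_cases hzx : σ.SameCycle z x
      · rw [if_pos hzx] at h
        exact hne (Quotient.exact h)
      · rw [if_neg hzx] at h
        have : z = x := hfixc z (Quotient.exact h)
        exact hzx (this ▸ Equiv.Perm.SameCycle.refl σ x)
    · exact congrArg Sum.inr (Subsingleton.elim u u')
  have := Nat.card_le_card_of_injective H hinj
  simpa [nc, Nat.card_sum] using this

lemma nc_one : nc (1 : Equiv.Perm (Fin N)) = N := by
  have hb : Function.Bijective (Quotient.mk (sc (1 : Equiv.Perm (Fin N)))) := by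
    constructor
    · intro x y h
      exact Equiv.Perm.sameCycle_one.mp (Quotient.exact h)
    · exact fun q => q.exists_rep
  have := Nat.card_eq_of_bijective _ hb
  simpa [nc] using this.symm

lemma nc_le (σ : Equiv.Perm (Fin N)) : nc σ ≤ N := by
  have := Nat.card_le_card_of_surjective (Quotient.mk (sc σ)) (fun q => q.exists_rep)
  simpa [nc] using this

lemma lower (L : List (Equiv.Perm (Fin N))) (hL : ∀ τ ∈ L, τ.IsSwap) :
    N ≤ nc L.prod + L.length := by
  induction L with
  | nil => simp [nc_one]
  | cons τ L ih =>
    obtain ⟨a, b, -, rfl⟩ := hL τ List.mem_cons_self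
    have h1 : nc L.prod ≤ nc (Equiv.swap a b * L.prod) + 1 := by
      have := nc_swap_mul_le (Equiv.swap a b * L.prod) a b
      rwa [swap_mul_self_mul] at this
    have h2 := ih (fun τ hτ => hL τ (List.mem_cons_of_mem _ hτ))
    simp only [List.prod_cons, List.length_cons]
    omega

lemma upper : ∀ (n : ℕ) (σ : Equiv.Perm (Fin N)), σ.support.card ≤ n →
    ∃ L : List (Equiv.Perm (Fin N)),
      (∀ τ ∈ L, τ.IsSwap) ∧ L.prod = σ ∧ L.length + nc σ = N := by
  intro n
  induction n with
  | zero =>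
    intro σ hσ
    have h1 : σ = 1 := support_eq_empty_iff.mp
      (Finset.card_eq_zero.mp (Nat.le_antisymm hσ (Nat.zero_le _)))
    subst h1
    exact ⟨[], by simp, by simp, by simp [nc_one]⟩
  | succ n ih =>
    intro σ hσ
    by_cases h1 : σ = 1
    · subst h1
      exact ⟨[], by simp, by simp, by simp [nc_one]⟩
    · have : ∃ x, σ x ≠ x := by
        by_contra h
        push_neg at h
        exact h1 (Equiv.ext h)
      obtain ⟨x, hx⟩ := this
      have hcard := Equiv.Perm.card_support_swap_mul hx
      obtain ⟨L, hLs, hLp, hLl⟩ := ih (Equiv.swap x (σ x) * σ) (by omega)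
      have heq : nc (Equiv.swap x (σ x) * σ) = nc σ + 1 :=
        Nat.le_antisymm (nc_swap_mul_le σ x (σ x)) (nc_add_one_le σ hx)
      refine ⟨Equiv.swap x (σ x) :: L, ?_, ?_, ?_⟩
      · intro τ hτ
        rcases List.mem_cons.mp hτ with rfl | hτ
        · exact ⟨x, σ x, Ne.symm hx, rfl⟩
        · exact hLs τ hτ
      · rw [List.prod_cons, hLp, swap_mul_self_mul]
      · simp only [List.length_cons]
        omega

lemma transLength_eq (σ : Equiv.Perm (Fin N)) : transLength σ = N - nc σ := by
  obtain ⟨L, hLs, hLp, hLl⟩ := upper σ.support.card σ le_rfl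
  have hle := nc_le σ
  apply Nat.le_antisymm
  · apply Nat.sInf_le
    exact ⟨L, hLs, hLp, by omega⟩
  · refine le_csInf ⟨L.length, L, hLs, hLp, rfl⟩ ?_
    rintro k ⟨M, hMs, hMp, rfl⟩
    have := lower M hMs
    rw [hMp] at this
    omega

noncomputable def pt {σ : Equiv.Perm (Fin N)} (c : σ.cycleFactorsFinset) : Fin N :=
  (Equiv.Perm.mem_cycleFactorsFinset_iff.mp c.2).1.nonempty_support.choose

lemma pt_spec {σ : Equiv.Perm (Fin N)} (c : σ.cycleFactorsFinset) :
    pt c ∈ (c : Equiv.Perm (Fin N)).support :=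
  (Equiv.Perm.mem_cycleFactorsFinset_iff.mp c.2).1.nonempty_support.choose_spec

lemma pt_moved {σ : Equiv.Perm (Fin N)} (c : σ.cycleFactorsFinset) : σ (pt c) ≠ pt c := by
  have h1 := (Equiv.Perm.mem_cycleFactorsFinset_iff.mp c.2).2 (pt c) (pt_spec c)
  have h2 := Equiv.Perm.mem_support.mp (pt_spec c)
  rw [← h1]
  exact h2

lemma numCycles_eq (σ : Equiv.Perm (Fin N)) : numCycles σ = nc σ := by
  set B : {x : Fin N // σ x = x} ⊕ σ.cycleFactorsFinset → Quotient (sc σ) :=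
    Sum.elim (fun x => Quotient.mk (sc σ) x.1) (fun c => Quotient.mk (sc σ) (pt c)) with hB
  have hsurj : Function.Surjective B := by
    intro q
    obtain ⟨z, rfl⟩ := q.exists_rep
    by_cases hz : σ z = z
    · exact ⟨Sum.inl ⟨z, hz⟩, rfl⟩
    · have hc : σ.cycleOf z ∈ σ.cycleFactorsFinset :=
        Equiv.Perm.cycleOf_mem_cycleFactorsFinset_iff.mpr (Equiv.Perm.mem_support.mpr hz)
      have hmem := pt_spec (⟨σ.cycleOf z, hc⟩ : σ.cycleFactorsFinset)
      have key : Quotient.mk (sc σ) (pt (⟨σ.cycleOf z, hc⟩ : σ.cycleFactorsFinset)) =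
          Quotient.mk (sc σ) z :=
        Quotient.sound ((Equiv.Perm.mem_support_cycleOf_iff.mp hmem).1).symm
      exact ⟨Sum.inr ⟨σ.cycleOf z, hc⟩, key⟩
  have hinj : Function.Injective B := by
    rintro (⟨z, hz⟩ | c) (⟨w, hw⟩ | c') h
    · simp only [hB, Sum.elim_inl] at h
      have := fixed_eq hz (Quotient.exact h)
      exact congrArg Sum.inl (Subtype.ext this.symm)
    · exfalso
      simp only [hB, Sum.elim_inl, Sum.elim_inr] at h
      have := fixed_eq hz (Quotient.exact h)
      exact pt_moved c' (by rw [this]; exact hz)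
    · exfalso
      simp only [hB, Sum.elim_inl, Sum.elim_inr] at h
      have := fixed_eq hw (Quotient.exact h).symm
      exact pt_moved c (by rw [this]; exact hw)
    · simp only [hB, Sum.elim_inr] at h
      have hsc : σ.SameCycle (pt c) (pt c') := Quotient.exact h
      have h1 : (c : Equiv.Perm (Fin N)) = σ.cycleOf (pt c) :=
        Equiv.Perm.cycle_is_cycleOf (pt_spec c) c.2
      have h2 : (c' : Equiv.Perm (Fin N)) = σ.cycleOf (pt c') :=
        Equiv.Perm.cycle_is_cycleOf (pt_spec c') c'.2
      have := hsc.cycleOf_eq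
      exact congrArg Sum.inr (Subtype.ext (by rw [h1, h2, this]))
  have hcard := Nat.card_eq_of_bijective B ⟨hinj, hsurj⟩
  rw [Nat.card_sum] at hcard
  have hfix : Nat.card {x : Fin N // σ x = x} = (Finset.univ.filter fun x => σ x = x).card := by
    rw [Nat.card_eq_fintype_card, Fintype.card_subtype]
  have hfac : Nat.card σ.cycleFactorsFinset = σ.cycleType.card := by
    rw [Nat.card_eq_fintype_card, Fintype.card_coe, Equiv.Perm.cycleType_def,
      Multiset.card_map, Finset.card_def]
  rw [hfix, hfac] at hcard
  rw [numCycles, nc, ← hcard]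
  omega
end PfAux
open PfAux in
theorem numCycles_and_length_of_tilde (l : ℕ) (ε : Fin (2 * l) → ℤ)
    (hε : ∀ i, ε i = 1 ∨ ε i = -1) (hsum : ∑ i, ε i = 0)
    (p q : Fin l → Fin (2 * l)) (hp : StrictMono p) (hq : StrictMono q)
    (hpr : Set.range p = {i | ε i = 1}) (hqr : Set.range q = {i | ε i = -1})
    (π : Equiv.Perm (Fin (2 * l))) (hπ : ∀ i, ε (π i) = -ε i)
    (πt : Equiv.Perm (Fin l)) (hπt : ∀ k, π (π (p k)) = p (πt k)) :
    numCycles π = numCycles πt ∧ transLength π = transLength πt + l := by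
  classical
  have hP1 : ∀ (n : ℕ) (k : Fin l), (π ^ (2 * n)) (p k) = p ((πt ^ n) k) := by
    intro n
    induction n with
    | zero => simp
    | succ n ih =>
      intro k
      have h2 : 2 * (n + 1) = 2 * n + 2 := by ring
      have h3 : (π ^ 2) (p k) = p (πt k) := by
        rw [sq, Equiv.Perm.mul_apply]
        exact hπt k
      rw [h2, pow_add, Equiv.Perm.mul_apply, h3, ih (πt k), ← Equiv.Perm.mul_apply,
        ← pow_succ]
  have hε1 : ∀ k, ε (p k) = 1 := by
    intro k
    have : p k ∈ Set.range p := ⟨k, rfl⟩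
    rw [hpr] at this
    exact this
  have hP2 : ∀ (x : Fin (2 * l)) (n : ℕ), ε ((π ^ n) x) = (-1) ^ n * ε x := by
    intro x n
    induction n with
    | zero => simp
    | succ n ih =>
      rw [pow_succ' π, Equiv.Perm.mul_apply, hπ, ih]
      ring
  -- the bijection between quotients
  have hwd : ∀ k k' : Fin l, πt.SameCycle k k' →
      Quotient.mk (sc π) (p k) = Quotient.mk (sc π) (p k') := by
    intro k k' h
    obtain ⟨n, hn⟩ := sameCycle_iff_nat.mp h
    exact Quotient.sound (sameCycle_iff_nat.mpr ⟨2 * n, by rw [hP1, hn]⟩)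
  set Φ : Quotient (sc πt) → Quotient (sc π) :=
    Quotient.lift (fun k => Quotient.mk (sc π) (p k)) hwd with hΦ
  have hsurj : Function.Surjective Φ := by
    intro w
    obtain ⟨x, rfl⟩ := w.exists_rep
    rcases hε x with h1 | h1
    · have : x ∈ Set.range p := by rw [hpr]; exact h1
      obtain ⟨k, rfl⟩ := this
      exact ⟨Quotient.mk (sc πt) k, rfl⟩
    · have h2 : ε (π x) = 1 := by rw [hπ, h1]; ring
      have : π x ∈ Set.range p := by rw [hpr]; exact h2
      obtain ⟨k, hk⟩ := this
      refine ⟨Quotient.mk (sc πt) k, ?_⟩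
      simp only [hΦ, Quotient.lift_mk]
      exact Quotient.sound (sameCycle_iff_nat.mpr ⟨1, by rw [pow_one]; exact hk.symm⟩).symm
  have hinj : Function.Injective Φ := by
    intro w w' h
    obtain ⟨k, rfl⟩ := w.exists_rep
    obtain ⟨k', rfl⟩ := w'.exists_rep
    simp only [hΦ, Quotient.lift_mk] at h
    have hsc : π.SameCycle (p k) (p k') := Quotient.exact h
    obtain ⟨n, hn⟩ := sameCycle_iff_nat.mp hsc
    have hpar : (1 : ℤ) = (-1) ^ n := by
      have h9 := hP2 (p k) n
      rw [hn, hε1, hε1, mul_one] at h9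
      exact h9
    have heven : Even n := by
      rcases Nat.even_or_odd n with he | ho
      · exact he
      · exfalso
        rw [Odd.neg_one_pow ho] at hpar
        omega
    obtain ⟨m, hm⟩ := heven
    have hmk : p ((πt ^ m) k) = p k' := by
      rw [← hP1]
      rw [show 2 * m = m + m from two_mul m, ← hm, hn]
    exact Quotient.sound (sameCycle_iff_nat.mpr ⟨m, hp.injective hmk⟩)
  have hnc : nc π = nc πt := (Nat.card_eq_of_bijective Φ ⟨hinj, hsurj⟩).symm
  have e1 : numCycles π = nc π := numCycles_eq π
  have e2 : numCycles πt = nc πt := numCycles_eq πt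
  have e3 : transLength π = 2 * l - nc π := transLength_eq π
  have e4 : transLength πt = l - nc πt := transLength_eq πt
  have e5 : nc πt ≤ l := nc_le πt
  constructor
  · omega
  · omega
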